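/- Let (L, ∘_λ, [·_λ ·]) be a transposed Poisson conformal superalgebra. Then for all homogeneous h, x, y, z ∈ L the following identity holds: (−1)^{|x||z|} [h_λ x] ∘_{λ+γ} [y_{μ−γ} z] + (−1)^{|x||y|} [h_λ y] ∘_{λ+μ−γ} [z_{−∂−γ} x] + (−1)^{|y||z|} [h_λ z] ∘_{−∂−μ} [x_γ y] = 0. -/
import Mathlib


open Polynomial
open scoped TensorProduct

noncomputable section

namespace TPCSAFormal

/-- The super-sign `(-1)^{i·j}` for parities `i, j ∈ ℤ/2ℤ`. -/
def sgn (i j : ZMod 2) : ℂ := (-1 : ℂ) ^ (i.val * j.val)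

variable (L : Type*) [AddCommGroup L] [Module ℂ L]
  [Module (Polynomial ℂ) L] [IsScalarTower ℂ (Polynomial ℂ) L]

/-- A conformal `λ`-product on the `ℂ[∂]`-module `L`, recorded by its family of `n`-th
product coefficients: `a ∘_λ b = ∑_n λ^n • coeff n a b`, with finitely many nonzero terms.
This is exactly the data of a `ℂ`-bilinear map `L ⊗ L → ℂ[λ] ⊗ L`. -/
structure ConformalProduct where
  coeff : ℕ → L →ₗ[ℂ] L →ₗ[ℂ] L
  coeff_finite : ∀ a b : L, ∃ N : ℕ, ∀ n : ℕ, N ≤ n → coeff n a b = 0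

variable {L}

/-- The value `a ∘_λ b` of the `λ`-product at `λ ∈ ℂ`.  Since `ℂ` is infinite, identities
between such values for all `λ` are equivalent to the corresponding polynomial identities. -/
def ConformalProduct.mul (m : ConformalProduct L) (lam : ℂ) (a b : L) : L :=
  ∑ᶠ n : ℕ, lam ^ n • m.coeff n a b

/-- The value `a ∘_{-∂-λ} b`, where `∂` acts on `L` as scalar multiplication by
`X ∈ ℂ[∂]` (the variable `λ` being replaced by the operator `-∂-λ`). -/
def ConformalProduct.cmul (m : ConformalProduct L) (lam : ℂ) (a b : L) : L :=
  ∑ᶠ n : ℕ, ((-((X : Polynomial ℂ) + C lam)) ^ n) • m.coeff n a b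

variable (L) in
/-- A `ℤ₂`-grading on `L` making it a `ℤ₂`-graded `ℂ[∂]`-module: `L = L₀ ⊕ L₁` with
`∂ L_i ⊆ L_i`, where `∂` acts as multiplication by `X ∈ ℂ[∂]`. -/
structure SuperModule where
  grade : ZMod 2 → Submodule ℂ L
  isInternal : DirectSum.IsInternal grade
  X_smul_mem : ∀ (i : ZMod 2) (a : L), a ∈ grade i → (X : Polynomial ℂ) • a ∈ grade i

/-- `m` is an even `λ`-product on the `ℤ₂`-graded `ℂ[∂]`-module `(L, S)`:
it is even with respect to the grading and conformally sesquilinear. -/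
structure IsLambdaProduct (S : SuperModule L) (m : ConformalProduct L) : Prop where
  even : ∀ (i j : ZMod 2) (a b : L), a ∈ S.grade i → b ∈ S.grade j →
    ∀ n : ℕ, m.coeff n a b ∈ S.grade (i + j)
  sesq_left : ∀ (lam : ℂ) (a b : L),
    m.mul lam ((X : Polynomial ℂ) • a) b = (-lam) • m.mul lam a b
  sesq_right : ∀ (lam : ℂ) (a b : L),
    m.mul lam a ((X : Polynomial ℂ) • b) =
      (X : Polynomial ℂ) • m.mul lam a b + lam • m.mul lam a b

/-- `(L, S, m)` is a commutative associative conformal superalgebra. -/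
structure IsCommAssoc (S : SuperModule L) (m : ConformalProduct L)
    extends IsLambdaProduct S m : Prop where
  comm : ∀ (i j : ZMod 2) (a b : L), a ∈ S.grade i → b ∈ S.grade j →
    ∀ lam : ℂ, m.mul lam a b = sgn i j • m.cmul lam b a
  assoc : ∀ (lam mu : ℂ) (a b c : L),
    m.mul lam a (m.mul mu b c) = m.mul (lam + mu) (m.mul lam a b) c

/-- `(L, S, br)` is a Lie conformal superalgebra. -/
structure IsLie (S : SuperModule L) (br : ConformalProduct L)
    extends IsLambdaProduct S br : Prop where
  skew : ∀ (i j : ZMod 2) (a b : L), a ∈ S.grade i → b ∈ S.grade j →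
    ∀ lam : ℂ, br.mul lam a b = -(sgn i j • br.cmul lam b a)
  jacobi : ∀ (i j : ZMod 2) (a b : L), a ∈ S.grade i → b ∈ S.grade j →
    ∀ (c : L) (lam mu : ℂ),
      br.mul lam a (br.mul mu b c) =
        br.mul (lam + mu) (br.mul lam a b) c + sgn i j • br.mul mu b (br.mul lam a c)

/-- `(L, S, m, br)` is a transposed Poisson conformal superalgebra. -/
structure IsTPCSA (S : SuperModule L) (m br : ConformalProduct L) : Prop where
  commAssoc : IsCommAssoc S m
  lie : IsLie S br
  transposedLeibniz : ∀ (i j : ZMod 2) (a b : L), a ∈ S.grade i → b ∈ S.grade j →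
    ∀ (c : L) (lam mu : ℂ),
      (2 : ℂ) • m.mul lam a (br.mul mu b c) =
        br.mul (lam + mu) (m.mul lam a b) c + sgn i j • br.mul mu b (m.mul lam a c)

/-- `(L, S, m, br)` is a Poisson conformal superalgebra. -/
structure IsPCSA (S : SuperModule L) (m br : ConformalProduct L) : Prop where
  commAssoc : IsCommAssoc S m
  lie : IsLie S br
  leibniz : ∀ (i j : ZMod 2) (a b : L), a ∈ S.grade i → b ∈ S.grade j →
    ∀ (c : L) (lam mu : ℂ),
      br.mul lam a (m.mul mu b c) =
        m.mul (lam + mu) (br.mul lam a b) c + sgn i j • m.mul mu b (br.mul lam a c)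

/-- `(L, S, br, α)` is a Hom-Lie conformal superalgebra. -/
structure IsHomLie (S : SuperModule L) (br : ConformalProduct L) (α : L → L)
    extends IsLambdaProduct S br : Prop where
  map_smul_add : ∀ (c : ℂ) (a b : L), α (c • a + b) = c • α a + α b
  map_grade : ∀ (i : ZMod 2) (a : L), a ∈ S.grade i → α a ∈ S.grade i
  commute_partial : ∀ a : L, α ((X : Polynomial ℂ) • a) = (X : Polynomial ℂ) • α a
  skew : ∀ (i j : ZMod 2) (a b : L), a ∈ S.grade i → b ∈ S.grade j →
    ∀ lam : ℂ, br.mul lam a b = -(sgn i j • br.cmul lam b a)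
  homJacobi : ∀ (i j : ZMod 2) (a b : L), a ∈ S.grade i → b ∈ S.grade j →
    ∀ (c : L) (lam mu : ℂ),
      br.mul lam (α a) (br.mul mu b c) =
        br.mul (lam + mu) (br.mul lam a b) (α c) + sgn i j • br.mul mu (α b) (br.mul lam a c)

/-- `(L, S, p)` is a left-symmetric conformal superalgebra. -/
structure IsLeftSymmetric (S : SuperModule L) (p : ConformalProduct L)
    extends IsLambdaProduct S p : Prop where
  leftSym : ∀ (i j : ZMod 2) (a b : L), a ∈ S.grade i → b ∈ S.grade j →
    ∀ (c : L) (lam mu : ℂ),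
      p.mul (lam + mu) (p.mul lam a b) c - p.mul lam a (p.mul mu b c) =
        sgn i j • (p.mul (lam + mu) (p.mul mu b a) c - p.mul mu b (p.mul lam a c))

/-- `(L, S, p)` is a (left) Novikov conformal superalgebra. -/
structure IsNovikov (S : SuperModule L) (p : ConformalProduct L)
    extends IsLeftSymmetric S p : Prop where
  novikov : ∀ (j k : ZMod 2) (b c : L), b ∈ S.grade j → c ∈ S.grade k →
    ∀ (a : L) (lam mu : ℂ),
      p.mul (lam + mu) (p.mul lam a b) c = sgn j k • p.cmul mu (p.mul lam a c) b

/-- `(L, S, mc, p)` is a Novikov-Poisson conformal superalgebra. -/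
structure IsNovikovPoisson (S : SuperModule L) (mc p : ConformalProduct L) : Prop where
  commAssoc : IsCommAssoc S mc
  novikov : IsNovikov S p
  compat₁ : ∀ (lam mu : ℂ) (a b c : L),
    p.mul (lam + mu) (mc.mul lam a b) c = mc.mul lam a (p.mul mu b c)
  compat₂ : ∀ (i j : ZMod 2) (a b : L), a ∈ S.grade i → b ∈ S.grade j →
    ∀ (c : L) (lam mu : ℂ),
      mc.mul (lam + mu) (p.mul lam a b) c - p.mul lam a (mc.mul mu b c) =
        sgn i j • (mc.mul (lam + mu) (p.mul mu b a) c - p.mul mu b (mc.mul lam a c))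

/-- `(L, S, mc, p)` is a pre-Lie commutative conformal superalgebra. -/
structure IsPreLieComm (S : SuperModule L) (mc p : ConformalProduct L) : Prop where
  commAssoc : IsCommAssoc S mc
  leftSymmetric : IsLeftSymmetric S p
  compat : ∀ (i j : ZMod 2) (a b : L), a ∈ S.grade i → b ∈ S.grade j →
    ∀ (c : L) (lam mu : ℂ),
      p.mul lam a (mc.mul mu b c) =
        mc.mul (lam + mu) (p.mul lam a b) c + sgn i j • mc.mul mu b (p.mul lam a c)

/-- `(L, S, mc, p)` is a pre-Lie Poisson conformal superalgebra. -/
structure IsPreLiePoisson (S : SuperModule L) (mc p : ConformalProduct L) : Prop where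
  commAssoc : IsCommAssoc S mc
  leftSymmetric : IsLeftSymmetric S p
  compat₁ : ∀ (lam mu : ℂ) (a b c : L),
    p.mul (lam + mu) (mc.mul lam a b) c = mc.mul lam a (p.mul mu b c)
  compat₂ : ∀ (i j : ZMod 2) (a b : L), a ∈ S.grade i → b ∈ S.grade j →
    ∀ (c : L) (lam mu : ℂ),
      mc.mul (lam + mu) (p.mul lam a b) c - p.mul lam a (mc.mul mu b c) =
        sgn i j • (mc.mul (lam + mu) (p.mul mu b a) c - p.mul mu b (mc.mul lam a c))


-- CHUNK2 appended to base
set_option linter.unusedSectionVars false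

section Aux

lemma zmod2_cases (i : ZMod 2) : i = 0 ∨ i = 1 := by revert i; decide

lemma zmod_two_add : (1 + 1 : ZMod 2) = 0 := by decide

@[simp] lemma sgn_zero_left (j : ZMod 2) : sgn 0 j = 1 := by simp [sgn]

@[simp] lemma sgn_zero_right (i : ZMod 2) : sgn i 0 = 1 := by simp [sgn]

@[simp] lemma sgn_one_one : sgn 1 1 = -1 := by simp [sgn, ZMod.val_one]

lemma sgn_comm (i j : ZMod 2) : sgn i j = sgn j i := by simp [sgn, Nat.mul_comm]

lemma sgn_mul_self (i j : ZMod 2) : sgn i j * sgn i j = 1 := by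
  rw [sgn, ← pow_add, ← two_mul, pow_mul]
  norm_num

lemma Csmul (c : ℂ) (v : L) : (C c : ℂ[X]) • v = c • v := by
  rw [← Polynomial.algebraMap_eq]; exact algebraMap_smul _ c v

lemma finsum_eq_range_sum {M : Type*} [AddCommMonoid M] (g : ℕ → M) (N : ℕ)
    (h : ∀ n, N ≤ n → g n = 0) : ∑ᶠ n, g n = ∑ n ∈ Finset.range N, g n := by
  apply finsum_eq_sum_of_support_subset
  intro n hn
  simp only [Finset.coe_range, Set.mem_Iio]
  by_contra hc
  exact hn (h n (le_of_not_gt hc))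

namespace ConformalProduct

lemma mul_eq_sum (m : ConformalProduct L) (lam : ℂ) (a b : L) (N : ℕ)
    (h : ∀ n, N ≤ n → m.coeff n a b = 0) :
    m.mul lam a b = ∑ n ∈ Finset.range N, lam ^ n • m.coeff n a b :=
  finsum_eq_range_sum _ N (fun n hn => by rw [h n hn, smul_zero])

lemma cmul_eq_sum (m : ConformalProduct L) (lam : ℂ) (a b : L) (N : ℕ)
    (h : ∀ n, N ≤ n → m.coeff n a b = 0) :
    m.cmul lam a b = ∑ n ∈ Finset.range N,
      ((-((X : Polynomial ℂ) + C lam)) ^ n) • m.coeff n a b :=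
  finsum_eq_range_sum _ N (fun n hn => by rw [h n hn, smul_zero])

lemma mul_add_right (m : ConformalProduct L) (lam : ℂ) (a u v : L) :
    m.mul lam a (u + v) = m.mul lam a u + m.mul lam a v := by
  obtain ⟨N1, h1⟩ := m.coeff_finite a u
  obtain ⟨N2, h2⟩ := m.coeff_finite a v
  rw [m.mul_eq_sum lam a u (max N1 N2) (fun n hn => h1 n (le_trans (le_max_left _ _) hn)),
    m.mul_eq_sum lam a v (max N1 N2) (fun n hn => h2 n (le_trans (le_max_right _ _) hn)),
    m.mul_eq_sum lam a (u + v) (max N1 N2) (fun n hn => by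
      rw [map_add, h1 n (le_trans (le_max_left _ _) hn),
        h2 n (le_trans (le_max_right _ _) hn), add_zero]),
    ← Finset.sum_add_distrib]
  exact Finset.sum_congr rfl (fun n _ => by rw [map_add, smul_add])

lemma mul_smul_right (m : ConformalProduct L) (lam : ℂ) (c : ℂ) (a u : L) :
    m.mul lam a (c • u) = c • m.mul lam a u := by
  obtain ⟨N, h⟩ := m.coeff_finite a u
  rw [m.mul_eq_sum lam a u N h,
    m.mul_eq_sum lam a (c • u) N (fun n hn => by rw [map_smul, h n hn, smul_zero]),
    Finset.smul_sum]
  exact Finset.sum_congr rfl (fun n _ => by rw [map_smul, smul_comm])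

lemma mul_add_left (m : ConformalProduct L) (lam : ℂ) (a u b : L) :
    m.mul lam (a + u) b = m.mul lam a b + m.mul lam u b := by
  obtain ⟨N1, h1⟩ := m.coeff_finite a b
  obtain ⟨N2, h2⟩ := m.coeff_finite u b
  rw [m.mul_eq_sum lam a b (max N1 N2) (fun n hn => h1 n (le_trans (le_max_left _ _) hn)),
    m.mul_eq_sum lam u b (max N1 N2) (fun n hn => h2 n (le_trans (le_max_right _ _) hn)),
    m.mul_eq_sum lam (a + u) b (max N1 N2) (fun n hn => by
      rw [map_add, LinearMap.add_apply, h1 n (le_trans (le_max_left _ _) hn),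
        h2 n (le_trans (le_max_right _ _) hn), add_zero]),
    ← Finset.sum_add_distrib]
  exact Finset.sum_congr rfl (fun n _ => by rw [map_add, LinearMap.add_apply, smul_add])

lemma mul_smul_left (m : ConformalProduct L) (lam : ℂ) (c : ℂ) (a b : L) :
    m.mul lam (c • a) b = c • m.mul lam a b := by
  obtain ⟨N, h⟩ := m.coeff_finite a b
  rw [m.mul_eq_sum lam a b N h,
    m.mul_eq_sum lam (c • a) b N (fun n hn => by
      rw [map_smul, LinearMap.smul_apply, h n hn, smul_zero]),
    Finset.smul_sum]
  exact Finset.sum_congr rfl (fun n _ => by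
    rw [map_smul, LinearMap.smul_apply, smul_comm])

lemma mul_neg_right (m : ConformalProduct L) (lam : ℂ) (a u : L) :
    m.mul lam a (-u) = -m.mul lam a u := by
  rw [show -u = (-1 : ℂ) • u by simp, mul_smul_right]; simp

lemma mul_neg_left (m : ConformalProduct L) (lam : ℂ) (a b : L) :
    m.mul lam (-a) b = -m.mul lam a b := by
  rw [show -a = (-1 : ℂ) • a by simp, mul_smul_left]; simp

lemma mul_sub_right (m : ConformalProduct L) (lam : ℂ) (a u v : L) :
    m.mul lam a (u - v) = m.mul lam a u - m.mul lam a v := by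
  rw [sub_eq_add_neg, mul_add_right, mul_neg_right, ← sub_eq_add_neg]

lemma mul_sub_left (m : ConformalProduct L) (lam : ℂ) (a u b : L) :
    m.mul lam (a - u) b = m.mul lam a b - m.mul lam u b := by
  rw [sub_eq_add_neg, mul_add_left, mul_neg_left, ← sub_eq_add_neg]

end ConformalProduct

def mulRLM (m : ConformalProduct L) (lam : ℂ) (a : L) : L →ₗ[ℂ] L where
  toFun b := m.mul lam a b
  map_add' u v := m.mul_add_right lam a u v
  map_smul' c u := m.mul_smul_right lam c a u

@[simp] lemma mulRLM_apply (m : ConformalProduct L) (lam : ℂ) (a b : L) :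
    mulRLM m lam a b = m.mul lam a b := rfl

def mulLLM (m : ConformalProduct L) (lam : ℂ) (b : L) : L →ₗ[ℂ] L where
  toFun a := m.mul lam a b
  map_add' u v := m.mul_add_left lam u v b
  map_smul' c u := m.mul_smul_left lam c u b

@[simp] lemma mulLLM_apply (m : ConformalProduct L) (lam : ℂ) (a b : L) :
    mulLLM m lam b a = m.mul lam a b := rfl

-- ===== sesquilinearity, polynomial version =====

variable {S : SuperModule L} {m br : ConformalProduct L}

lemma mul_Xpow_right (hm : IsLambdaProduct S m) (lam : ℂ) (a b : L) (n : ℕ) :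
    m.mul lam a (((X : ℂ[X]) ^ n) • b)
      = (((X : ℂ[X]) + C lam) ^ n) • m.mul lam a b := by
  induction n generalizing b with
  | zero => simp
  | succ n ih =>
    rw [pow_succ, mul_smul, ih, hm.sesq_right, pow_succ, mul_smul, add_smul, Csmul]

lemma mul_psmul_right (hm : IsLambdaProduct S m) (lam : ℂ) (p : ℂ[X]) (a b : L) :
    m.mul lam a (p • b) = (p.comp ((X : ℂ[X]) + C lam)) • m.mul lam a b := by
  induction p using Polynomial.induction_on' with
  | add p q hp hq =>
    rw [add_smul, ConformalProduct.mul_add_right, hp, hq, Polynomial.add_comp, add_smul]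
  | monomial n c =>
    rw [← Polynomial.C_mul_X_pow_eq_monomial, mul_smul, Csmul,
      ConformalProduct.mul_smul_right, mul_Xpow_right hm, Polynomial.mul_comp,
      Polynomial.C_comp, Polynomial.pow_comp, Polynomial.X_comp, mul_smul, Csmul]

lemma mul_Xpow_left (hm : IsLambdaProduct S m) (lam : ℂ) (a b : L) (n : ℕ) :
    m.mul lam (((X : ℂ[X]) ^ n) • a) b = ((-lam) ^ n) • m.mul lam a b := by
  induction n generalizing a with
  | zero => simp
  | succ n ih =>
    rw [pow_succ, mul_smul, ih, hm.sesq_left, pow_succ, mul_smul]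

lemma mul_psmul_left (hm : IsLambdaProduct S m) (lam : ℂ) (p : ℂ[X]) (a b : L) :
    m.mul lam (p • a) b = (p.eval (-lam)) • m.mul lam a b := by
  induction p using Polynomial.induction_on' with
  | add p q hp hq =>
    rw [add_smul, ConformalProduct.mul_add_left, hp, hq, Polynomial.eval_add, add_smul]
  | monomial n c =>
    rw [← Polynomial.C_mul_X_pow_eq_monomial, mul_smul, Csmul,
      ConformalProduct.mul_smul_left, mul_Xpow_left hm, Polynomial.eval_mul,
      Polynomial.eval_C, Polynomial.eval_pow, Polynomial.eval_X, mul_smul]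

-- ===== grading =====

lemma mul_mem (hm : IsLambdaProduct S m) {i j : ZMod 2} {a b : L}
    (ha : a ∈ S.grade i) (hb : b ∈ S.grade j) (lam : ℂ) :
    m.mul lam a b ∈ S.grade (i + j) := by
  obtain ⟨N, hN⟩ := m.coeff_finite a b
  rw [m.mul_eq_sum lam a b N hN]
  exact Submodule.sum_mem _ (fun n _ => Submodule.smul_mem _ _ (hm.even i j a b ha hb n))

-- ===== flips =====

lemma comm_flip (hCA : IsCommAssoc S m) {i j : ZMod 2} {a b : L}
    (ha : a ∈ S.grade i) (hb : b ∈ S.grade j) (lam : ℂ) :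
    m.cmul lam b a = sgn i j • m.mul lam a b := by
  rw [hCA.comm i j a b ha hb lam, smul_smul, sgn_mul_self, one_smul]

lemma skew_flip (hL : IsLie S br) {i j : ZMod 2} {a b : L}
    (ha : a ∈ S.grade i) (hb : b ∈ S.grade j) (lam : ℂ) :
    br.cmul lam b a = -(sgn i j • br.mul lam a b) := by
  rw [hL.skew i j a b ha hb lam, smul_neg, neg_neg, smul_smul, sgn_mul_self, one_smul]

-- ===== CB lemmas =====

lemma CB (hCA : IsCommAssoc S m) (hbr : IsLambdaProduct S br) {ia ib : ZMod 2} {a b : L}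
    (ha : a ∈ S.grade ia) (hb : b ∈ S.grade ib) (sg nu : ℂ) (c : L) :
    br.mul sg (m.mul nu b a) c = sgn ia ib • br.mul sg (m.mul (sg - nu) a b) c := by
  have hflip : m.mul nu b a = sgn ia ib • m.cmul nu a b := by
    rw [hCA.comm ib ia b a hb ha nu, sgn_comm]
  obtain ⟨N, hN⟩ := m.coeff_finite a b
  have key : ∀ n (w : L), br.mul sg ((-((X : ℂ[X]) + C nu)) ^ n • w) c
      = ((sg - nu) ^ n) • br.mul sg w c := by
    intro n w
    rw [mul_psmul_left hbr]
    congr 1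
    rw [Polynomial.eval_pow]
    congr 1
    simp only [Polynomial.eval_neg, Polynomial.eval_add, Polynomial.eval_X, Polynomial.eval_C]
    ring
  have msum : ∀ (g : ℕ → L), br.mul sg (∑ n ∈ Finset.range N, g n) c
      = ∑ n ∈ Finset.range N, br.mul sg (g n) c := fun g =>
    map_sum (mulLLM br sg c) g (Finset.range N)
  rw [hflip, ConformalProduct.mul_smul_left, m.cmul_eq_sum nu a b N hN,
    m.mul_eq_sum (sg - nu) a b N hN]
  congr 1
  rw [msum, msum]
  exact Finset.sum_congr rfl (fun n _ => by
    rw [key, ConformalProduct.mul_smul_left])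

lemma CB2 (hCA : IsCommAssoc S m) (hbr : IsLambdaProduct S br) {ia ib : ZMod 2} {a b : L}
    (ha : a ∈ S.grade ia) (hb : b ∈ S.grade ib) (sg th nu : ℂ) (hh c : L) :
    br.mul sg (br.mul th hh (m.mul nu b a)) c
      = sgn ia ib • br.mul sg (br.mul th hh (m.mul (sg - th - nu) a b)) c := by
  have hflip : m.mul nu b a = sgn ia ib • m.cmul nu a b := by
    rw [hCA.comm ib ia b a hb ha nu, sgn_comm]
  obtain ⟨N, hN⟩ := m.coeff_finite a b
  have key : ∀ n (w : L), br.mul sg (br.mul th hh ((-((X : ℂ[X]) + C nu)) ^ n • w)) c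
      = ((sg - th - nu) ^ n) • br.mul sg (br.mul th hh w) c := by
    intro n w
    rw [mul_psmul_right hbr, mul_psmul_left hbr]
    congr 1
    rw [Polynomial.pow_comp, Polynomial.eval_pow]
    congr 1
    simp only [Polynomial.neg_comp, Polynomial.add_comp, Polynomial.X_comp, Polynomial.C_comp,
      Polynomial.eval_neg, Polynomial.eval_add, Polynomial.eval_X, Polynomial.eval_C]
    ring
  have msum : ∀ (g : ℕ → L), br.mul sg (∑ n ∈ Finset.range N, g n) c
      = ∑ n ∈ Finset.range N, br.mul sg (g n) c := fun g =>
    map_sum (mulLLM br sg c) g (Finset.range N)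
  have msum2 : ∀ (g : ℕ → L), br.mul th hh (∑ n ∈ Finset.range N, g n)
      = ∑ n ∈ Finset.range N, br.mul th hh (g n) := fun g =>
    map_sum (mulRLM br th hh) g (Finset.range N)
  rw [hflip, ConformalProduct.mul_smul_right, ConformalProduct.mul_smul_left,
    m.cmul_eq_sum nu a b N hN, m.mul_eq_sum (sg - th - nu) a b N hN]
  congr 1
  rw [msum2, msum, msum2, msum]
  exact Finset.sum_congr rfl (fun n _ => by
    rw [key, ConformalProduct.mul_smul_right, ConformalProduct.mul_smul_left])


-- ===== polynomial coefficient extraction =====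

lemma poly_ext_range (f : ℕ → L) (N : ℕ)
    (h : ∀ lam : ℂ, ∑ n ∈ Finset.range N, lam ^ n • f n = 0) :
    ∀ n ∈ Finset.range N, f n = 0 := by
  intro n hn
  rw [← Module.forall_dual_apply_eq_zero_iff ℂ]
  intro φ
  have hP : (∑ t ∈ Finset.range N, C (φ (f t)) * X ^ t : ℂ[X]) = 0 := by
    apply Polynomial.funext
    intro r
    have h2 := congrArg φ (h r)
    simp only [map_sum, map_smul, map_zero, smul_eq_mul] at h2
    simp only [Polynomial.eval_finset_sum, Polynomial.eval_mul, Polynomial.eval_C,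
      Polynomial.eval_pow, Polynomial.eval_X, Polynomial.eval_zero]
    rw [← h2]
    exact Finset.sum_congr rfl (fun t _ => mul_comm _ _)
  have h3 := congrArg (fun p => Polynomial.coeff p n) hP
  simp only [Polynomial.finset_sum_coeff, Polynomial.coeff_C_mul, Polynomial.coeff_X_pow,
    Polynomial.coeff_zero, mul_ite, mul_one, mul_zero] at h3
  rwa [Finset.sum_ite_eq (Finset.range N) n (fun t => φ (f t)), if_pos hn] at h3

-- ===== binomial resummation =====

lemma resum (e : ℕ → L) (N : ℕ) (μ : ℂ) (q : ℂ[X]) :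
    ∑ s ∈ Finset.range N, q ^ s •
        (∑ t ∈ Finset.range N, (((t.choose s : ℂ)) * μ ^ (t - s)) • e t)
      = ∑ t ∈ Finset.range N, (q + C μ) ^ t • e t := by
  have step1 : ∀ s t, q ^ s • ((((t.choose s : ℂ)) * μ ^ (t - s)) • e t)
      = (C ((t.choose s : ℂ) * μ ^ (t - s)) * q ^ s) • e t := by
    intro s t
    rw [← Csmul ((t.choose s : ℂ) * μ ^ (t - s)) (e t), smul_smul, mul_comm]
  calc ∑ s ∈ Finset.range N, q ^ s •
          (∑ t ∈ Finset.range N, (((t.choose s : ℂ)) * μ ^ (t - s)) • e t)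
      = ∑ s ∈ Finset.range N, ∑ t ∈ Finset.range N,
          (C ((t.choose s : ℂ) * μ ^ (t - s)) * q ^ s) • e t := by
        exact Finset.sum_congr rfl (fun s _ => by
          rw [Finset.smul_sum]
          exact Finset.sum_congr rfl (fun t _ => step1 s t))
    _ = ∑ t ∈ Finset.range N, ∑ s ∈ Finset.range N,
          (C ((t.choose s : ℂ) * μ ^ (t - s)) * q ^ s) • e t := Finset.sum_comm
    _ = ∑ t ∈ Finset.range N, (q + C μ) ^ t • e t := by
        apply Finset.sum_congr rfl
        intro t ht
        rw [← Finset.sum_smul]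
        congr 1
        have hsub : Finset.range (t + 1) ⊆ Finset.range N :=
          Finset.range_subset_range.mpr (Finset.mem_range.mp ht)
        rw [add_pow]
        rw [← Finset.sum_subset hsub (fun s _ hs => by
          have : t < s := by
            by_contra hc
            exact hs (Finset.mem_range.mpr (by omega))
          rw [Nat.choose_eq_zero_of_lt this]
          simp)]
        apply Finset.sum_congr rfl
        intro s _
        rw [map_mul, map_pow, Polynomial.C_eq_natCast]
        ring

-- ===== the conjugated transposed-Leibniz rule (proved by coefficient transfer) =====

lemma T1 {m br : ConformalProduct L} (hT : IsTPCSA S m br) {ia ib ic : ZMod 2} {a b c : L}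
    (ha : a ∈ S.grade ia) (hb : b ∈ S.grade ib) (hc : c ∈ S.grade ic) (μ ν : ℂ) :
    (2 : ℂ) • m.mul (μ + ν) (br.mul μ b c) a
      = br.mul μ b (m.mul ν c a) - sgn ib ic • br.mul ν c (m.mul μ b a) := by
  have hCA := hT.commAssoc
  have hm := hCA.toIsLambdaProduct
  have hbr := hT.lie.toIsLambdaProduct
  have hBC : br.mul μ b c ∈ S.grade (ib + ic) := mul_mem hbr hb hc μ
  have hW : m.mul μ b a ∈ S.grade (ib + ia) := mul_mem hm hb ha μ
  obtain ⟨N1, hN1⟩ := m.coeff_finite a (br.mul μ b c)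
  obtain ⟨N2, hN2⟩ := br.coeff_finite (m.mul μ b a) c
  obtain ⟨N3, hN3⟩ := m.coeff_finite a c
  set N := max N1 (max N2 N3) with hNdef
  have hB1 : ∀ n, N ≤ n → m.coeff n a (br.mul μ b c) = 0 :=
    fun n hn => hN1 n (le_trans (le_max_left _ _) hn)
  have hB2 : ∀ n, N ≤ n → br.coeff n (m.mul μ b a) c = 0 :=
    fun n hn => hN2 n (le_trans (le_trans (le_max_left _ _) (le_max_right N1 _)) hn)
  have hB3 : ∀ n, N ≤ n → m.coeff n a c = 0 :=
    fun n hn => hN3 n (le_trans (le_trans (le_max_right _ _) (le_max_right N1 _)) hn)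
  set g : ℕ → L := fun s_ => ∑ t ∈ Finset.range N,
    (((t.choose s_ : ℂ)) * μ ^ (t - s_)) • br.coeff t (m.mul μ b a) c with hgdef
  set f : ℕ → L := fun n => (2:ℂ) • m.coeff n a (br.mul μ b c) - sgn ia ib • g n
    - sgn ia ib • br.mul μ b (m.coeff n a c) with hfdef
  have expand : ∀ q : ℂ[X], ∑ n ∈ Finset.range N, q ^ n • f n
      = (2:ℂ) • (∑ n ∈ Finset.range N, q ^ n • m.coeff n a (br.mul μ b c))
        - sgn ia ib • (∑ n ∈ Finset.range N, q ^ n • g n)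
        - sgn ia ib • (∑ n ∈ Finset.range N, q ^ n • br.mul μ b (m.coeff n a c)) := by
    intro q
    simp only [hfdef, smul_sub]
    rw [Finset.sum_sub_distrib, Finset.sum_sub_distrib, Finset.smul_sum, Finset.smul_sum,
      Finset.smul_sum]
    congr 1
    · congr 1
      · exact Finset.sum_congr rfl (fun n _ => smul_comm _ _ _)
      · exact Finset.sum_congr rfl (fun n _ => smul_comm _ _ _)
    · exact Finset.sum_congr rfl (fun n _ => smul_comm _ _ _)
  have bridge : ∀ (v : ℕ → L) (lam : ℂ), ∑ n ∈ Finset.range N, lam ^ n • v n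
      = ∑ n ∈ Finset.range N, ((C lam : ℂ[X])) ^ n • v n :=
    fun v lam => Finset.sum_congr rfl (fun n _ => by rw [← Polynomial.C_pow, Csmul])
  have hvanish : ∀ lam : ℂ, ∑ n ∈ Finset.range N, lam ^ n • f n = 0 := by
    intro lam
    rw [bridge f lam, expand (C lam)]
    have p1 : ∑ n ∈ Finset.range N, ((C lam : ℂ[X])) ^ n • m.coeff n a (br.mul μ b c)
        = m.mul lam a (br.mul μ b c) := by
      rw [m.mul_eq_sum lam a (br.mul μ b c) N hB1]
      exact (bridge (fun n => m.coeff n a (br.mul μ b c)) lam).symm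
    have p2 : ∑ n ∈ Finset.range N, ((C lam : ℂ[X])) ^ n • g n
        = br.mul (lam + μ) (m.mul μ b a) c := by
      simp only [hgdef]
      rw [resum (fun t => br.coeff t (m.mul μ b a) c) N μ (C lam)]
      rw [br.mul_eq_sum (lam + μ) (m.mul μ b a) c N hB2]
      exact Finset.sum_congr rfl (fun t _ => by rw [← Polynomial.C_add, ← Polynomial.C_pow, Csmul])
    have p3 : ∑ n ∈ Finset.range N, ((C lam : ℂ[X])) ^ n • br.mul μ b (m.coeff n a c)
        = br.mul μ b (m.mul lam a c) := by
      rw [m.mul_eq_sum lam a c N hB3]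
      rw [show br.mul μ b (∑ n ∈ Finset.range N, lam ^ n • m.coeff n a c)
          = ∑ n ∈ Finset.range N, br.mul μ b (lam ^ n • m.coeff n a c) from
        map_sum (mulRLM br μ b) _ _]
      exact Finset.sum_congr rfl (fun n _ => by
        rw [ConformalProduct.mul_smul_right, ← Polynomial.C_pow, Csmul])
    rw [p1, p2, p3]
    have hcb : br.mul (lam + μ) (m.mul μ b a) c
        = sgn ia ib • br.mul (lam + μ) (m.mul lam a b) c := by
      have h0 := CB hCA hbr ha hb (lam + μ) μ c
      rwa [add_sub_cancel_right] at h0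
    rw [hcb, smul_smul, sgn_mul_self, one_smul]
    have hTL := hT.transposedLeibniz ia ib a b ha hb c lam μ
    linear_combination (norm := module) hTL
  have hzero := poly_ext_range f N hvanish
  have hq0 : ∑ n ∈ Finset.range N, (-((X : ℂ[X]) + C (μ + ν))) ^ n • f n = 0 :=
    Finset.sum_eq_zero (fun n hn => by rw [hzero n hn, smul_zero])
  rw [expand] at hq0
  have Q1 : ∑ n ∈ Finset.range N, (-((X : ℂ[X]) + C (μ + ν))) ^ n • m.coeff n a (br.mul μ b c)
      = m.cmul (μ + ν) a (br.mul μ b c) :=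
    (m.cmul_eq_sum (μ + ν) a (br.mul μ b c) N hB1).symm
  have Q2 : ∑ n ∈ Finset.range N, (-((X : ℂ[X]) + C (μ + ν))) ^ n • g n
      = br.cmul ν (m.mul μ b a) c := by
    simp only [hgdef]
    rw [resum (fun t => br.coeff t (m.mul μ b a) c) N μ (-((X : ℂ[X]) + C (μ + ν)))]
    rw [show (-((X : ℂ[X]) + C (μ + ν)) + C μ : ℂ[X]) = -((X : ℂ[X]) + C ν) from by
      rw [Polynomial.C_add]; ring]
    exact (br.cmul_eq_sum ν (m.mul μ b a) c N hB2).symm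
  have Q3 : ∑ n ∈ Finset.range N,
        (-((X : ℂ[X]) + C (μ + ν))) ^ n • br.mul μ b (m.coeff n a c)
      = br.mul μ b (m.cmul ν a c) := by
    rw [m.cmul_eq_sum ν a c N hB3]
    rw [show br.mul μ b (∑ n ∈ Finset.range N, (-((X : ℂ[X]) + C ν)) ^ n • m.coeff n a c)
        = ∑ n ∈ Finset.range N, br.mul μ b ((-((X : ℂ[X]) + C ν)) ^ n • m.coeff n a c) from
      map_sum (mulRLM br μ b) _ _]
    refine Finset.sum_congr rfl (fun n _ => ?_)
    rw [mul_psmul_right hbr]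
    congr 1
    rw [Polynomial.pow_comp]
    congr 1
    simp only [Polynomial.neg_comp, Polynomial.add_comp, Polynomial.X_comp, Polynomial.C_comp]
    rw [Polynomial.C_add]; ring
  rw [Q1, Q2, Q3] at hq0
  have F1 : m.cmul (μ + ν) a (br.mul μ b c)
      = sgn (ib + ic) ia • m.mul (μ + ν) (br.mul μ b c) a := comm_flip hCA hBC ha (μ + ν)
  have F2 : br.cmul ν (m.mul μ b a) c
      = -(sgn ic (ib + ia) • br.mul ν c (m.mul μ b a)) := skew_flip hT.lie hc hW ν
  have F3 : m.cmul ν a c = sgn ic ia • m.mul ν c a := comm_flip hCA hc ha ν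
  rw [F1, F2, F3, ConformalProduct.mul_smul_right] at hq0
  rcases zmod2_cases ia with rfl|rfl <;> rcases zmod2_cases ib with rfl|rfl <;>
    rcases zmod2_cases ic with rfl|rfl <;>
    simp only [zmod_two_add, add_zero, zero_add, sgn_zero_left, sgn_zero_right,
      sgn_one_one] at hq0 ⊢ <;>
    first
    | linear_combination (norm := module) hq0
    | linear_combination (norm := module) -hq0

-- ===== the main mixed identity, pure-product form =====

lemma key {m br : ConformalProduct L} (hT : IsTPCSA S m br) {l i j k : ZMod 2} {h x y z : L}
    (hh : h ∈ S.grade l) (hx : x ∈ S.grade i) (hy : y ∈ S.grade j) (hz : z ∈ S.grade k)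
    (al be de : ℂ) :
    m.mul (al + be) (br.mul al h x) (br.mul de y z)
      - sgn i j • m.mul (al + de) (br.mul al h y) (br.mul be x z)
      + sgn (i + j) l • m.mul (be + de) (br.mul be x y) (br.mul al h z) = 0 := by
  have hCA := hT.commAssoc
  have hm := hCA.toIsLambdaProduct
  have hbr := hT.lie.toIsLambdaProduct
  have hhx : br.mul al h x ∈ S.grade (l + i) := mul_mem hbr hh hx al
  have hhy : br.mul al h y ∈ S.grade (l + j) := mul_mem hbr hh hy al
  have hxy : br.mul be x y ∈ S.grade (i + j) := mul_mem hbr hx hy be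
  have hyz : br.mul de y z ∈ S.grade (j + k) := mul_mem hbr hy hz de
  have hxz : br.mul be x z ∈ S.grade (i + k) := mul_mem hbr hx hz be
  have hhz : br.mul al h z ∈ S.grade (l + k) := mul_mem hbr hh hz al
  -- T1 instances for the three double brackets
  have H1 := T1 hT hyz hh hx al be
  have H2 := T1 hT hxz hh hy al de
  have H3 := T1 hT hhz hx hy be de
  -- transposed Leibniz instances, mapped into an outer bracket
  have b1 := hT.transposedLeibniz l j h y hh hy z al de
  have H4 := congrArg (fun w => br.mul be x w) b1
  simp only [ConformalProduct.mul_add_right, ConformalProduct.mul_smul_right] at H4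
  have b2 := hT.transposedLeibniz l i h x hh hx z al be
  have H5 := congrArg (fun w => br.mul de y w) b2
  simp only [ConformalProduct.mul_add_right, ConformalProduct.mul_smul_right] at H5
  have b3 := hT.transposedLeibniz j l y h hy hh z de al
  rw [add_comm de al] at b3
  have H6 := congrArg (fun w => br.mul be x w) b3
  simp only [ConformalProduct.mul_add_right, ConformalProduct.mul_smul_right] at H6
  have b4 := hT.transposedLeibniz i l x h hx hh z be al
  rw [add_comm be al] at b4
  have H7 := congrArg (fun w => br.mul de y w) b4
  simp only [ConformalProduct.mul_add_right, ConformalProduct.mul_smul_right] at H7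
  -- CB collapses mapped into an outer bracket
  have c1 := CB hCA hbr hh hy (al + de) de z
  rw [add_sub_cancel_right] at c1
  have H8 := congrArg (fun w => br.mul be x w) c1
  simp only [ConformalProduct.mul_smul_right] at H8
  have c2 := CB hCA hbr hh hx (al + be) be z
  rw [add_sub_cancel_right] at c2
  have H9 := congrArg (fun w => br.mul de y w) c2
  simp only [ConformalProduct.mul_smul_right] at H9
  -- outer transposed Leibniz on the products of double brackets
  have d1 := hT.transposedLeibniz (l + i) j (br.mul al h x) y hhx hy z (al + be) de
  have d2 := hT.transposedLeibniz (l + j) i (br.mul al h y) x hhy hx z (al + de) be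
  rw [show al + de + be = al + be + de from by ring] at d2
  have d3 := hT.transposedLeibniz (i + j) l (br.mul be x y) h hxy hh z (be + de) al
  rw [show be + de + al = al + be + de from by ring] at d3
  -- T1 instances for the inner products, mapped
  have e1 := T1 hT hy hh hx al be
  have E1m := congrArg (fun w => br.mul (al + be + de) w z) e1
  simp only [ConformalProduct.mul_sub_left, ConformalProduct.mul_smul_left] at E1m
  have e2 := T1 hT hz hh hx al be
  have E2m := congrArg (fun w => br.mul de y w) e2
  simp only [ConformalProduct.mul_sub_right, ConformalProduct.mul_smul_right] at E2m
  have e3 := T1 hT hx hh hy al de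
  have E3m := congrArg (fun w => br.mul (al + be + de) w z) e3
  simp only [ConformalProduct.mul_sub_left, ConformalProduct.mul_smul_left] at E3m
  have e4 := T1 hT hz hh hy al de
  have E4m := congrArg (fun w => br.mul be x w) e4
  simp only [ConformalProduct.mul_sub_right, ConformalProduct.mul_smul_right] at E4m
  have e5 := T1 hT hh hx hy be de
  have E5m := congrArg (fun w => br.mul (al + be + de) w z) e5
  simp only [ConformalProduct.mul_sub_left, ConformalProduct.mul_smul_left] at E5m
  have e6 := T1 hT hz hx hy be de
  have E6m := congrArg (fun w => br.mul al h w) e6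
  simp only [ConformalProduct.mul_sub_right, ConformalProduct.mul_smul_right] at E6m
  -- CB2 collapses
  have HQ3 := CB2 hCA hbr hx hy (al + be + de) al de h z
  rw [show al + be + de - al - de = be from by ring] at HQ3
  have HQ5 := CB2 hCA hbr hh hy (al + be + de) be de x z
  rw [show al + be + de - be - de = al from by ring] at HQ5
  have HQ6 := CB2 hCA hbr hh hx (al + be + de) de be y z
  rw [show al + be + de - de - be = al from by ring] at HQ6
  -- the W-identity pieces
  have s1 := hT.transposedLeibniz i j x y hx hy z be de
  have Hs1m := congrArg (fun w => br.mul al h w) s1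
  simp only [ConformalProduct.mul_add_right, ConformalProduct.mul_smul_right] at Hs1m
  have s2 := hT.transposedLeibniz j i y x hy hx z de be
  rw [add_comm de be] at s2
  have Hs2m := congrArg (fun w => br.mul al h w) s2
  simp only [ConformalProduct.mul_add_right, ConformalProduct.mul_smul_right] at Hs2m
  have c3 := CB hCA hbr hx hy (be + de) de z
  rw [add_sub_cancel_right] at c3
  have Hc3m := congrArg (fun w => br.mul al h w) c3
  simp only [ConformalProduct.mul_smul_right] at Hc3m
  -- case split on parities and assemble
  rcases zmod2_cases l with rfl|rfl <;> rcases zmod2_cases i with rfl|rfl <;>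
      rcases zmod2_cases j with rfl|rfl <;>
    simp only [zmod_two_add, add_zero, zero_add, sgn_zero_left, sgn_zero_right, sgn_one_one]
      at H1 H2 H3 H4 H5 H6 H7 H8 H9 d1 d2 d3 E1m E2m E3m E4m E5m E6m HQ3 HQ5 HQ6
         Hs1m Hs2m Hc3m ⊢
  · linear_combination (norm := module) (1/4 : ℂ) • H1 - (1/4 : ℂ) • H2 + (1/4 : ℂ) • H3 - (1/8 : ℂ) • H4 + (1/8 : ℂ) • H5 + (1/8 : ℂ) • H6 - (1/8 : ℂ) • H7 + (1/8 : ℂ) • H8 - (1/8 : ℂ) • H9 + (1/4 : ℂ) • d1 + (1/8 : ℂ) • E1m + (1/8 : ℂ) • E2m - (1/4 : ℂ) • d2 - (1/8 : ℂ) • E3m - (1/8 : ℂ) • E4m + (1/4 : ℂ) • d3 + (1/8 : ℂ) • E5m + (1/8 : ℂ) • E6m - (1/8 : ℂ) • HQ3 + (1/8 : ℂ) • HQ5 - (1/8 : ℂ) • HQ6 + (1/8 : ℂ) • Hs1m - (1/8 : ℂ) • Hs2m - (1/8 : ℂ) • Hc3m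
  · linear_combination (norm := module) (1/4 : ℂ) • H1 - (1/4 : ℂ) • H2 + (1/4 : ℂ) • H3 - (1/8 : ℂ) • H4 + (1/8 : ℂ) • H5 + (1/8 : ℂ) • H6 - (1/8 : ℂ) • H7 + (1/8 : ℂ) • H8 - (1/8 : ℂ) • H9 + (1/4 : ℂ) • d1 + (1/8 : ℂ) • E1m + (1/8 : ℂ) • E2m - (1/4 : ℂ) • d2 - (1/8 : ℂ) • E3m - (1/8 : ℂ) • E4m + (1/4 : ℂ) • d3 + (1/8 : ℂ) • E5m + (1/8 : ℂ) • E6m - (1/8 : ℂ) • HQ3 + (1/8 : ℂ) • HQ5 - (1/8 : ℂ) • HQ6 + (1/8 : ℂ) • Hs1m - (1/8 : ℂ) • Hs2m - (1/8 : ℂ) • Hc3m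
  · linear_combination (norm := module) (1/4 : ℂ) • H1 - (1/4 : ℂ) • H2 + (1/4 : ℂ) • H3 - (1/8 : ℂ) • H4 + (1/8 : ℂ) • H5 + (1/8 : ℂ) • H6 - (1/8 : ℂ) • H7 + (1/8 : ℂ) • H8 - (1/8 : ℂ) • H9 + (1/4 : ℂ) • d1 + (1/8 : ℂ) • E1m + (1/8 : ℂ) • E2m - (1/4 : ℂ) • d2 - (1/8 : ℂ) • E3m - (1/8 : ℂ) • E4m + (1/4 : ℂ) • d3 + (1/8 : ℂ) • E5m + (1/8 : ℂ) • E6m - (1/8 : ℂ) • HQ3 + (1/8 : ℂ) • HQ5 - (1/8 : ℂ) • HQ6 + (1/8 : ℂ) • Hs1m - (1/8 : ℂ) • Hs2m - (1/8 : ℂ) • Hc3m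
  · linear_combination (norm := module) (1/4 : ℂ) • H1 + (1/4 : ℂ) • H2 + (1/4 : ℂ) • H3 - (1/8 : ℂ) • H4 - (1/8 : ℂ) • H5 + (1/8 : ℂ) • H6 + (1/8 : ℂ) • H7 + (1/8 : ℂ) • H8 + (1/8 : ℂ) • H9 + (1/4 : ℂ) • d1 + (1/8 : ℂ) • E1m - (1/8 : ℂ) • E2m + (1/4 : ℂ) • d2 + (1/8 : ℂ) • E3m - (1/8 : ℂ) • E4m + (1/4 : ℂ) • d3 + (1/8 : ℂ) • E5m + (1/8 : ℂ) • E6m + (1/8 : ℂ) • HQ3 + (1/8 : ℂ) • HQ5 + (1/8 : ℂ) • HQ6 + (1/8 : ℂ) • Hs1m + (1/8 : ℂ) • Hs2m + (1/8 : ℂ) • Hc3m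
  · linear_combination (norm := module) (1/4 : ℂ) • H1 - (1/4 : ℂ) • H2 + (1/4 : ℂ) • H3 - (1/8 : ℂ) • H4 + (1/8 : ℂ) • H5 + (1/8 : ℂ) • H6 - (1/8 : ℂ) • H7 + (1/8 : ℂ) • H8 - (1/8 : ℂ) • H9 + (1/4 : ℂ) • d1 + (1/8 : ℂ) • E1m + (1/8 : ℂ) • E2m - (1/4 : ℂ) • d2 - (1/8 : ℂ) • E3m - (1/8 : ℂ) • E4m + (1/4 : ℂ) • d3 + (1/8 : ℂ) • E5m + (1/8 : ℂ) • E6m - (1/8 : ℂ) • HQ3 + (1/8 : ℂ) • HQ5 - (1/8 : ℂ) • HQ6 + (1/8 : ℂ) • Hs1m - (1/8 : ℂ) • Hs2m - (1/8 : ℂ) • Hc3m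
  · linear_combination (norm := module) (1/4 : ℂ) • H1 - (1/4 : ℂ) • H2 - (1/4 : ℂ) • H3 - (1/8 : ℂ) • H4 - (1/8 : ℂ) • H5 - (1/8 : ℂ) • H6 + (1/8 : ℂ) • H7 - (1/8 : ℂ) • H8 + (1/8 : ℂ) • H9 + (1/4 : ℂ) • d1 + (1/8 : ℂ) • E1m - (1/8 : ℂ) • E2m - (1/4 : ℂ) • d2 - (1/8 : ℂ) • E3m - (1/8 : ℂ) • E4m - (1/4 : ℂ) • d3 - (1/8 : ℂ) • E5m + (1/8 : ℂ) • E6m - (1/8 : ℂ) • HQ3 - (1/8 : ℂ) • HQ5 + (1/8 : ℂ) • HQ6 + (1/8 : ℂ) • Hs1m - (1/8 : ℂ) • Hs2m - (1/8 : ℂ) • Hc3m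
  · linear_combination (norm := module) (1/4 : ℂ) • H1 - (1/4 : ℂ) • H2 - (1/4 : ℂ) • H3 + (1/8 : ℂ) • H4 + (1/8 : ℂ) • H5 - (1/8 : ℂ) • H6 + (1/8 : ℂ) • H7 - (1/8 : ℂ) • H8 + (1/8 : ℂ) • H9 + (1/4 : ℂ) • d1 + (1/8 : ℂ) • E1m + (1/8 : ℂ) • E2m - (1/4 : ℂ) • d2 - (1/8 : ℂ) • E3m + (1/8 : ℂ) • E4m - (1/4 : ℂ) • d3 - (1/8 : ℂ) • E5m + (1/8 : ℂ) • E6m - (1/8 : ℂ) • HQ3 - (1/8 : ℂ) • HQ5 + (1/8 : ℂ) • HQ6 + (1/8 : ℂ) • Hs1m - (1/8 : ℂ) • Hs2m - (1/8 : ℂ) • Hc3m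
  · linear_combination (norm := module) (1/4 : ℂ) • H1 + (1/4 : ℂ) • H2 + (1/4 : ℂ) • H3 + (1/8 : ℂ) • H4 + (1/8 : ℂ) • H5 + (1/8 : ℂ) • H6 + (1/8 : ℂ) • H7 + (1/8 : ℂ) • H8 + (1/8 : ℂ) • H9 + (1/4 : ℂ) • d1 + (1/8 : ℂ) • E1m + (1/8 : ℂ) • E2m + (1/4 : ℂ) • d2 + (1/8 : ℂ) • E3m + (1/8 : ℂ) • E4m + (1/4 : ℂ) • d3 + (1/8 : ℂ) • E5m + (1/8 : ℂ) • E6m + (1/8 : ℂ) • HQ3 + (1/8 : ℂ) • HQ5 + (1/8 : ℂ) • HQ6 + (1/8 : ℂ) • Hs1m + (1/8 : ℂ) • Hs2m + (1/8 : ℂ) • Hc3m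

end Aux

/-- the identity (3.18) in a transposed Poisson conformal superalgebra. -/
theorem statement_4 (S : SuperModule L) (m br : ConformalProduct L)
    (hT : IsTPCSA S m br) (l i j k : ZMod 2) (h x y z : L)
    (hh : h ∈ S.grade l) (hx : x ∈ S.grade i) (hy : y ∈ S.grade j) (hz : z ∈ S.grade k)
    (lam mu gam : ℂ) :
    sgn i k • m.mul (lam + gam) (br.mul lam h x) (br.mul (mu - gam) y z)
      + sgn i j • m.mul (lam + mu - gam) (br.mul lam h y) (br.cmul gam z x)
      + sgn j k • m.cmul mu (br.mul lam h z) (br.mul gam x y) = 0 := by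
  have hCA := hT.commAssoc
  have hbr := hT.lie.toIsLambdaProduct
  have hhz : br.mul lam h z ∈ S.grade (l + k) := mul_mem hbr hh hz lam
  have hxy : br.mul gam x y ∈ S.grade (i + j) := mul_mem hbr hx hy gam
  have hf1 : br.cmul gam z x = -(sgn i k • br.mul gam x z) := skew_flip hT.lie hx hz gam
  have hf2 : m.cmul mu (br.mul lam h z) (br.mul gam x y)
      = sgn (i + j) (l + k) • m.mul mu (br.mul gam x y) (br.mul lam h z) :=
    comm_flip hCA hxy hhz mu
  have k1 := key hT hh hx hy hz lam gam (mu - gam)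
  rw [show lam + (mu - gam) = lam + mu - gam from by ring] at k1
  rw [show gam + (mu - gam) = mu from by ring] at k1
  rw [hf1, hf2, ConformalProduct.mul_neg_right, ConformalProduct.mul_smul_right]
  rcases zmod2_cases l with rfl|rfl <;> rcases zmod2_cases i with rfl|rfl <;>
      rcases zmod2_cases j with rfl|rfl <;> rcases zmod2_cases k with rfl|rfl <;>
    simp only [zmod_two_add, add_zero, zero_add, sgn_zero_left, sgn_zero_right, sgn_one_one]
      at k1 ⊢ <;>
    first
    | linear_combination (norm := module) k1
    | linear_combination (norm := module) -k1

end TPCSAFormal
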